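/- The full relaxation source S(G) = -(6/τ)·det(G)^{5/6}·G·G̊ on symmetric positive definite matrices vanishes if and only if G is a positive multiple of the identity; moreover, the elastic energy E_e(G) = (c²/4)‖G̊‖² is nonincreasing along solutions of dG/dt = S(G). -/

import Mathlib

open Matrix

attribute [local instance] Matrix.linftyOpNormedRing Matrix.linftyOpNormedAlgebra

/-- Deviatoric (trace-free) part of a 3×3 matrix. -/
noncomputable def dev (A : Matrix (Fin 3) (Fin 3) ℝ) : Matrix (Fin 3) (Fin 3) ℝ :=
  A - (A.trace / 3) • (1 : Matrix (Fin 3) (Fin 3) ℝ)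

/-- The relaxation source `S(G) = -(6/τ) det(G)^(5/6) G G̊`. -/
noncomputable def relaxSource (τ : ℝ) (A : Matrix (Fin 3) (Fin 3) ℝ) :
    Matrix (Fin 3) (Fin 3) ℝ :=
  (-(6 / τ) * A.det ^ ((5 : ℝ) / 6)) • (A * dev A)

/-- The elastic (shear) energy `E_e(G) = (c²/4) ‖G̊‖²` (squared Frobenius norm). -/
noncomputable def elasticEnergy (c : ℝ) (A : Matrix (Fin 3) (Fin 3) ℝ) : ℝ :=
  c ^ 2 / 4 * ∑ i, ∑ j, (dev A i j) ^ 2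

lemma dev_trace (A : Matrix (Fin 3) (Fin 3) ℝ) : (dev A).trace = 0 := by
  simp [dev, Matrix.trace_sub, Matrix.trace_smul, Matrix.trace_one]

lemma dot_one (B : Matrix (Fin 3) (Fin 3) ℝ) :
    ∑ i, ∑ j, B i j * (1 : Matrix (Fin 3) (Fin 3) ℝ) i j = B.trace := by
  simp [Matrix.one_apply, Matrix.trace, Matrix.diag, mul_ite]

lemma dot_dev_right (B M : Matrix (Fin 3) (Fin 3) ℝ) (hB : B.trace = 0) :
    ∑ i, ∑ j, B i j * dev M i j = ∑ i, ∑ j, B i j * M i j := by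
  have h1 : ∑ i, ∑ j, B i j * dev M i j
      = ∑ i, ∑ j, (B i j * M i j - (M.trace / 3) * (B i j * (1 : Matrix (Fin 3) (Fin 3) ℝ) i j)) := by
    refine Finset.sum_congr rfl fun i _ => Finset.sum_congr rfl fun j _ => ?_
    simp [dev, Matrix.sub_apply, Matrix.smul_apply, smul_eq_mul]
    ring
  rw [h1]
  simp only [Finset.sum_sub_distrib, ← Finset.mul_sum]
  rw [dot_one, hB]
  ring

lemma quad_nonneg (A D : Matrix (Fin 3) (Fin 3) ℝ) (hA : A.PosSemidef) :
    0 ≤ ∑ i, ∑ j, D i j * (A * D) i j := by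
  have h1 : ∑ i, ∑ j, D i j * (A * D) i j = (Dᴴ * (A * D)).trace := by
    simp only [Matrix.trace, Matrix.diag, Matrix.mul_apply, Matrix.conjTranspose_apply,
      star_trivial]
    rw [Finset.sum_comm]
  rw [h1, ← Matrix.mul_assoc]
  have hps : (Dᴴ * A * D).PosSemidef := hA.conjTranspose_mul_mul_same D
  refine Finset.sum_nonneg fun i _ => ?_
  have h := hps.dotProduct_mulVec_nonneg (Pi.single i 1)
  simpa [dotProduct, Matrix.mulVec, Pi.single_apply, mul_ite, ite_mul] using h

lemma trace_pos (A : Matrix (Fin 3) (Fin 3) ℝ) (hA : A.PosDef) : 0 < A.trace := by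
  refine Finset.sum_pos (fun i _ => ?_) ⟨0, Finset.mem_univ 0⟩
  have h := hA.dotProduct_mulVec_pos (x := Pi.single i 1) (by intro h; have := congrFun h i; simp at this)
  simpa [dotProduct, Matrix.mulVec, Pi.single_apply, mul_ite, ite_mul] using h

/-- dev as an entrywise continuous linear map. -/
noncomputable def devEntryCLM (i j : Fin 3) : Matrix (Fin 3) (Fin 3) ℝ →L[ℝ] ℝ :=
  LinearMap.toContinuousLinearMap
    { toFun := fun A => dev A i j
      map_add' := by
        intro A B
        simp [dev, Matrix.trace_add, Matrix.sub_apply, Matrix.add_apply, Matrix.smul_apply,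
          smul_eq_mul]
        ring
      map_smul' := by
        intro r A
        simp [dev, Matrix.trace_smul, Matrix.sub_apply, Matrix.smul_apply, smul_eq_mul]
        ring }

lemma dissipation_nonpos (τ : ℝ) (hτ : 0 < τ) (A : Matrix (Fin 3) (Fin 3) ℝ)
    (hA : A.PosDef) :
    ∑ i, ∑ j, dev A i j * dev (relaxSource τ A) i j ≤ 0 := by
  set k : ℝ := -(6 / τ) * A.det ^ ((5 : ℝ) / 6) with hk
  have hkneg : k < 0 := by
    have hdet : 0 < A.det := hA.det_pos
    have : 0 < A.det ^ ((5 : ℝ) / 6) := Real.rpow_pos_of_pos hdet _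
    have h6 : 0 < 6 / τ := by positivity
    nlinarith
  have hdevS : ∀ i j, dev (relaxSource τ A) i j = k * dev (A * dev A) i j := by
    intro i j
    simp [relaxSource, dev, Matrix.trace_smul, Matrix.sub_apply, Matrix.smul_apply,
      smul_eq_mul]
    ring
  have h1 : ∑ i, ∑ j, dev A i j * dev (relaxSource τ A) i j
      = k * ∑ i, ∑ j, dev A i j * dev (A * dev A) i j := by
    rw [Finset.mul_sum]
    refine Finset.sum_congr rfl fun i _ => ?_
    rw [Finset.mul_sum]
    refine Finset.sum_congr rfl fun j _ => ?_
    rw [hdevS]; ring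
  rw [h1, dot_dev_right _ _ (dev_trace A)]
  have hq : 0 ≤ ∑ i, ∑ j, dev A i j * (A * dev A) i j :=
    quad_nonneg A (dev A) hA.posSemidef
  exact mul_nonpos_of_nonpos_of_nonneg hkneg.le hq

/-- The relaxation source on SPD matrices vanishes iff `G` is a positive multiple of
the identity; moreover the elastic energy is nonincreasing along solutions of
`dG/dt = S(G)`. -/
theorem relaxation_source_equilibrium_and_dissipation
    (τ c : ℝ) (hτ : 0 < τ) (hc : 0 < c) :
    (∀ A : Matrix (Fin 3) (Fin 3) ℝ, A.IsSymm → A.PosDef →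
      (relaxSource τ A = 0 ↔
        ∃ a : ℝ, 0 < a ∧ A = a • (1 : Matrix (Fin 3) (Fin 3) ℝ))) ∧
      (∀ G : ℝ → Matrix (Fin 3) (Fin 3) ℝ,
        (∀ t, (G t).IsSymm) → (∀ t, (G t).PosDef) →
        (∀ t, HasDerivAt G (relaxSource τ (G t)) t) →
        Antitone fun t => elasticEnergy c (G t)) := by
  constructor
  · intro A hsym hpd
    constructor
    · intro hS
      have hdet : 0 < A.det := hpd.det_pos
      have hkne : (-(6 / τ) * A.det ^ ((5 : ℝ) / 6)) ≠ 0 := by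
        have : 0 < A.det ^ ((5 : ℝ) / 6) := Real.rpow_pos_of_pos hdet _
        have h6 : 0 < 6 / τ := by positivity
        nlinarith
      have hAD : A * dev A = 0 := by
        rcases smul_eq_zero.mp hS with h | h
        · exact absurd h hkne
        · exact h
      have hdev : dev A = 0 := by
        have hinv : A⁻¹ * A = 1 := Matrix.nonsing_inv_mul A hdet.ne'.isUnit
        calc dev A = (A⁻¹ * A) * dev A := by rw [hinv, Matrix.one_mul]
          _ = A⁻¹ * (A * dev A) := by rw [Matrix.mul_assoc]
          _ = 0 := by rw [hAD, Matrix.mul_zero]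
      refine ⟨A.trace / 3, by have := trace_pos A hpd; linarith, ?_⟩
      have := sub_eq_zero.mp hdev
      exact this
    · rintro ⟨a, ha, rfl⟩
      have htr : (a • (1 : Matrix (Fin 3) (Fin 3) ℝ)).trace = 3 * a := by
        simp [Matrix.trace_smul, Matrix.trace_one]; ring
      have hdev : dev (a • (1 : Matrix (Fin 3) (Fin 3) ℝ)) = 0 := by
        rw [dev, htr]
        rw [show (3 * a / 3 : ℝ) = a by ring, sub_self]
      simp [relaxSource, hdev]
  · intro G hsym hpd hG
    have hder : ∀ t, HasDerivAt (fun s => elasticEnergy c (G s))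
        (c ^ 2 / 4 * ∑ i, ∑ j,
          (2 : ℕ) * dev (G t) i j ^ 1 * dev (relaxSource τ (G t)) i j) t := by
      intro t
      have hentry : ∀ i j, HasDerivAt (fun s => dev (G s) i j)
          (dev (relaxSource τ (G t)) i j) t := by
        intro i j
        exact ((devEntryCLM i j).hasFDerivAt.comp_hasDerivAt t (hG t))
      have hsq : ∀ i j, HasDerivAt (fun s => dev (G s) i j ^ 2)
          ((2 : ℕ) * dev (G t) i j ^ 1 * dev (relaxSource τ (G t)) i j) t := by
        intro i j
        exact (hentry i j).pow 2
      have hsum : HasDerivAt (fun s => ∑ i, ∑ j, dev (G s) i j ^ 2)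
          (∑ i, ∑ j, (2 : ℕ) * dev (G t) i j ^ 1 * dev (relaxSource τ (G t)) i j) t := by
        exact HasDerivAt.fun_sum fun i _ => HasDerivAt.fun_sum fun j _ => hsq i j
      simpa [elasticEnergy] using hsum.const_mul (c ^ 2 / 4)
    refine antitone_of_deriv_nonpos (fun t => (hder t).differentiableAt) fun t => ?_
    rw [(hder t).deriv]
    have hQ := dissipation_nonpos τ hτ (G t) (hpd t)
    have heq : ∑ i, ∑ j, (2 : ℕ) * dev (G t) i j ^ 1 * dev (relaxSource τ (G t)) i j
        = 2 * ∑ i, ∑ j, dev (G t) i j * dev (relaxSource τ (G t)) i j := by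
      rw [Finset.mul_sum]
      refine Finset.sum_congr rfl fun i _ => ?_
      rw [Finset.mul_sum]
      refine Finset.sum_congr rfl fun j _ => ?_
      push_cast; ring
    rw [heq]
    nlinarith [sq_nonneg c]
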